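/- If D is a T-Weil divisor on a complete n-dimensional toric variety and the polytope P_D = P_{D,Δ(1)} is n-dimensional with normal fan equal to Δ, then ĥ^0(D) = vol P_D, and if moreover D is Cartier and ample then (D^n) = vol P_D = n! · (Euclidean volume of P_D). -/

import Mathlib

open Finset Filter Topology MeasureTheory Pointwise

section
open Bornology Metric

section
variable (n : ℕ)

private def cube (m : ℕ) (u : Fin n → ℤ) : Set (Fin n → ℝ) :=
  Set.univ.pi fun j => Set.Ico ((u j : ℝ)/m) ((u j : ℝ)/m + 1/m)

private lemma mem_cube_iff {m : ℕ} (hm : 0 < m) (u : Fin n → ℤ) (x : Fin n → ℝ) :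
    x ∈ cube n m u ↔ ∀ j, ⌊(m : ℝ) * x j⌋ = u j := by
  have hm' : (0:ℝ) < m := by exact_mod_cast hm
  simp only [cube, Set.mem_pi, Set.mem_univ, forall_true_left, Set.mem_Ico]
  refine forall_congr' fun j => ?_
  rw [Int.floor_eq_iff, ← add_div, div_le_iff₀ hm', lt_div_iff₀ hm']
  constructor
  · rintro ⟨h1, h2⟩; exact ⟨by linarith [mul_comm (x j) (m:ℝ)], by push_cast; linarith [mul_comm (x j) (m:ℝ)]⟩
  · rintro ⟨h1, h2⟩; push_cast at h2; exact ⟨by linarith [mul_comm (x j) (m:ℝ)], by linarith [mul_comm (x j) (m:ℝ)]⟩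

private lemma volume_cube {m : ℕ} (hm : 0 < m) (u : Fin n → ℤ) :
    volume (cube n m u) = ENNReal.ofReal (1/m) ^ n := by
  have hm' : (0:ℝ) < m := by exact_mod_cast hm
  rw [cube, volume_pi_pi]
  simp [Real.volume_Ico]
end

section
variable {n : ℕ}

private lemma cube_measurable (m : ℕ) (u : Fin n → ℤ) : MeasurableSet (cube n m u) :=
  MeasurableSet.univ_pi fun _ => measurableSet_Ico

private lemma cube_disjoint {m : ℕ} (hm : 0 < m) :
    Pairwise (Function.onFun Disjoint fun u : Fin n → ℤ => cube n m u) := by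
  intro u u' huu'
  rw [Function.onFun, Set.disjoint_left]
  intro x hx hx'
  rw [mem_cube_iff n hm] at hx hx'
  exact huu' (funext fun j => (hx j).symm.trans (hx' j))

/-- membership in S via the rescaled point -/
private lemma mem_S_iff {m : ℕ} (hm : 0 < m) (P : Set (Fin n → ℝ)) (u : Fin n → ℤ) :
    ((fun j => (u j : ℝ)) ∈ (m : ℝ) • P) ↔ (fun j => (u j : ℝ)/m) ∈ P := by
  have hm' : ((m:ℝ)) ≠ 0 := by positivity
  rw [Set.mem_smul_set_iff_inv_smul_mem₀ hm']
  congr! 1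
  funext j
  simp [div_eq_inv_mul]
end

section
variable {n : ℕ}

private lemma S_finite {P : Set (Fin n → ℝ)} (hbdd : Bornology.IsBounded P) (m : ℕ) :
    {u : Fin n → ℤ | (fun j => (u j : ℝ)) ∈ (m : ℝ) • P}.Finite := by
  obtain ⟨r, hr⟩ := hbdd.subset_closedBall 0
  set B : ℤ := ⌈(m : ℝ) * r⌉
  have : {u : Fin n → ℤ | (fun j => (u j : ℝ)) ∈ (m : ℝ) • P} ⊆
      Set.univ.pi fun _ => Set.Icc (-B) B := by
    rintro u ⟨y, hy, hyu⟩
    have hy' : ‖y‖ ≤ r := by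
      have := hr hy
      rwa [Metric.mem_closedBall, dist_zero_right] at this
    intro j _
    have hj : (u j : ℝ) = (m : ℝ) * y j := by
      have := congrFun hyu j
      simpa using this.symm
    have h1 : |(u j : ℝ)| ≤ (m : ℝ) * r := by
      rw [hj, abs_mul, abs_of_nonneg (by positivity : (0:ℝ) ≤ (m:ℝ))]
      have : |y j| ≤ ‖y‖ := by
        simpa using norm_le_pi_norm y j
      nlinarith [norm_nonneg y, abs_nonneg (y j)]
    have h2 : ((m : ℝ) * r) ≤ (B : ℝ) := Int.le_ceil _
    have h3 : |(u j : ℝ)| ≤ (B : ℝ) := h1.trans h2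
    rw [abs_le] at h3
    constructor
    · exact_mod_cast h3.1
    · exact_mod_cast h3.2
  exact Set.Finite.subset (Set.Finite.pi fun _ => Set.finite_Icc _ _) this
end

section
variable {n : ℕ}

private lemma interior_eq_iUnion {P : Set (Fin n → ℝ)} (hP : IsClosed P)
    (hne : Pᶜ.Nonempty) :
    (⋃ k : ℕ, {x : Fin n → ℝ | 1/((k:ℝ)+1) < infDist x Pᶜ}) = interior P := by
  ext x
  simp only [Set.mem_iUnion, Set.mem_setOf_eq]
  constructor
  · rintro ⟨k, hk⟩
    have hpos : 0 < infDist x Pᶜ := lt_trans (by positivity) hk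
    have hball : ball x (infDist x Pᶜ) ⊆ P := by
      intro y hy
      by_contra hyP
      have hd : dist x y < infDist x Pᶜ := mem_ball'.mp hy
      have hyP' : y ∈ Pᶜ := hyP
      exact absurd (infDist_le_dist_of_mem hyP') (not_le.mpr hd)
    exact mem_interior_iff_mem_nhds.mpr (Filter.mem_of_superset (ball_mem_nhds x hpos) hball)
  · intro hx
    have h1 : x ∉ closure Pᶜ := by
      rw [closure_compl, Set.mem_compl_iff, not_not]
      exact hx
    have h2 : 0 < infDist x (closure Pᶜ) :=
      (isClosed_closure.notMem_iff_infDist_pos hne.closure).mp h1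
    rw [infDist_closure] at h2
    obtain ⟨k, hk⟩ := exists_nat_one_div_lt h2
    exact ⟨k, hk⟩
end

section
variable {n : ℕ}

private lemma count_tendsto (hn : 0 < n) {P : Set (Fin n → ℝ)} (hP : IsClosed P)
    (hconv : Convex ℝ P) (hbdd : Bornology.IsBounded P) :
    Tendsto (fun m : ℕ =>
        (Nat.card {u : Fin n → ℤ | (fun j => (u j : ℝ)) ∈ (m : ℝ) • P} : ℝ) / (m : ℝ) ^ n)
      atTop (𝓝 (volume P).toReal) := by
  haveI : Nonempty (Fin n) := Fin.pos_iff_nonempty.mp hn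
  -- the complement is nonempty
  have hcne : Pᶜ.Nonempty := by
    obtain ⟨r, hr⟩ := hbdd.subset_closedBall 0
    refine ⟨fun _ => max r 0 + 1, fun hmem => ?_⟩
    have := hr hmem
    rw [Metric.mem_closedBall, dist_zero_right] at this
    rw [pi_norm_const] at this
    have h0 : (0:ℝ) ≤ max r 0 + 1 := by positivity
    rw [Real.norm_eq_abs, abs_of_nonneg h0] at this
    have : r ≤ max r 0 := le_max_left r 0
    linarith [le_max_left r 0, this]
  -- finiteness facts
  have hPfin : volume P ≠ ⊤ := hbdd.measure_lt_top.ne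
  have hthick2fin : volume (thickening 2 P) ≠ ⊤ := (hbdd.thickening).measure_lt_top.ne
  -- the finsets of lattice points
  set N : ℕ → Finset (Fin n → ℤ) := fun m => (S_finite hbdd m).toFinset with hN
  have hcard : ∀ m : ℕ, (Nat.card {u : Fin n → ℤ | (fun j => (u j : ℝ)) ∈ (m : ℝ) • P}) =
      (N m).card := by
    intro m
    rw [Nat.card_coe_set_eq, Set.ncard_eq_toFinset_card _ (S_finite hbdd m)]
  -- union of cubes
  set U : ℕ → Set (Fin n → ℝ) := fun m => ⋃ u ∈ N m, cube n m u with hUdef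
  have hUvol : ∀ m, 0 < m → volume (U m) = (N m).card * ENNReal.ofReal (1/m) ^ n := by
    intro m hm
    rw [hUdef]
    rw [measure_biUnion_finset ((cube_disjoint hm).set_pairwise _)
      (fun u _ => cube_measurable m u)]
    simp [volume_cube n hm, mul_comm]
  have hUfin : ∀ m, 0 < m → volume (U m) ≠ ⊤ := by
    intro m hm
    rw [hUvol m hm]
    exact ENNReal.mul_ne_top (ENNReal.natCast_ne_top _)
      (ENNReal.pow_ne_top ENNReal.ofReal_ne_top)
  have hUtoReal : ∀ m, 0 < m →
      (volume (U m)).toReal = ((N m).card : ℝ) / (m:ℝ)^n := by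
    intro m hm
    have hm' : (0:ℝ) < m := by exact_mod_cast hm
    rw [hUvol m hm, ENNReal.toReal_mul, ENNReal.toReal_pow,
      ENNReal.toReal_ofReal (by positivity)]
    simp [div_pow, div_eq_mul_inv]
  -- upper inclusion
  have hupper : ∀ m : ℕ, 0 < m → U m ⊆ thickening (2/(m:ℝ)) P := by
    intro m hm x hx
    have hm' : (0:ℝ) < m := by exact_mod_cast hm
    simp only [hUdef, Set.mem_iUnion] at hx
    obtain ⟨u, hu, hxu⟩ := hx
    have huP : (fun j => (u j : ℝ)/m) ∈ P :=
      (mem_S_iff hm P u).mp ((S_finite hbdd m).mem_toFinset.mp hu)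
    rw [Metric.mem_thickening_iff]
    refine ⟨_, huP, ?_⟩
    have hle : dist x (fun j => (u j : ℝ)/m) ≤ 1/m := by
      rw [dist_pi_le_iff (by positivity)]
      intro j
      have hxj := hxu j (Set.mem_univ j)
      rw [Set.mem_Ico] at hxj
      rw [Real.dist_eq, abs_le]
      constructor <;> [linarith [hxj.1]; linarith [hxj.2]]
    have : (1:ℝ)/m < 2/m := by
      rw [div_lt_div_iff₀ hm' hm']; nlinarith
    linarith
  -- lower inclusion
  have hlower : ∀ m : ℕ, 1 ≤ m →
      {x : Fin n → ℝ | 1/(((m-1:ℕ):ℝ)+1) < infDist x Pᶜ} ⊆ U m := by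
    intro m hm x hx
    have hm' : (0:ℝ) < m := by exact_mod_cast hm
    have hmm : ((m-1:ℕ):ℝ) + 1 = (m:ℝ) := by
      have : (m - 1) + 1 = m := Nat.succ_pred_eq_of_pos hm
      exact_mod_cast congrArg (Nat.cast : ℕ → ℝ) this
    rw [Set.mem_setOf_eq, hmm] at hx
    set u : Fin n → ℤ := fun j => ⌊(m:ℝ) * x j⌋ with hu
    have hdist : dist x (fun j => (u j : ℝ)/m) ≤ 1/m := by
      rw [dist_pi_le_iff (by positivity)]
      intro j
      have h1 : ((u j : ℝ)) ≤ (m:ℝ) * x j := Int.floor_le _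
      have h2 : (m:ℝ) * x j < (u j : ℝ) + 1 := Int.lt_floor_add_one _
      have e1 : (u j : ℝ)/m ≤ x j := by
        rw [div_le_iff₀ hm']; linarith [mul_comm (x j) (m:ℝ)]
      have e2 : x j ≤ (u j : ℝ)/m + 1/m := by
        rw [← add_div, le_div_iff₀ hm']; linarith [mul_comm (x j) (m:ℝ)]
      rw [Real.dist_eq, abs_le]
      constructor <;> linarith
    have huP : (fun j => (u j : ℝ)/m) ∈ P := by
      by_contra h
      have h' : (fun j => (u j : ℝ)/m) ∈ Pᶜ := h
      have h2 := infDist_le_dist_of_mem (x := x) h'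
      linarith [h2.trans hdist]
    have huN : u ∈ N m := (S_finite hbdd m).mem_toFinset.mpr ((mem_S_iff hm P u).mpr huP)
    simp only [hUdef, Set.mem_iUnion]
    exact ⟨u, huN, (mem_cube_iff n hm u x).mpr fun j => rfl⟩
  -- volume of interior equals volume of P
  have hint : volume (interior P) = volume P := by
    refine le_antisymm (measure_mono interior_subset) ?_
    calc volume P ≤ volume (interior P ∪ frontier P) := by
          refine measure_mono ?_
          rw [← closure_eq_interior_union_frontier]
          exact subset_closure
      _ ≤ volume (interior P) + volume (frontier P) := measure_union_le _ _
      _ = volume (interior P) := by rw [hconv.addHaar_frontier volume, add_zero]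
  -- lower limit
  have hKlim : Tendsto (fun k : ℕ =>
      (volume {x : Fin n → ℝ | 1/((k:ℝ)+1) < infDist x Pᶜ}).toReal) atTop
      (𝓝 ((volume P).toReal)) := by
    have hmono : Monotone (fun k : ℕ => {x : Fin n → ℝ | 1/((k:ℝ)+1) < infDist x Pᶜ}) := by
      intro a b hab x hx
      simp only [Set.mem_setOf_eq] at *
      have : 1/((b:ℝ)+1) ≤ 1/((a:ℝ)+1) := by
        apply one_div_le_one_div_of_le (by positivity)
        exact_mod_cast by omega
      linarith
    have := tendsto_measure_iUnion_atTop (μ := volume) hmono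
    rw [interior_eq_iUnion hP hcne, hint] at this
    exact (ENNReal.tendsto_toReal hPfin).comp this
  have hKlim' : Tendsto (fun m : ℕ =>
      (volume {x : Fin n → ℝ | 1/(((m-1:ℕ):ℝ)+1) < infDist x Pᶜ}).toReal) atTop
      (𝓝 ((volume P).toReal)) := hKlim.comp (tendsto_sub_atTop_nat 1)
  -- upper limit
  have hTlim : Tendsto (fun m : ℕ => (volume (thickening (2/(m:ℝ)) P)).toReal) atTop
      (𝓝 ((volume P).toReal)) := by
    have hex : ∃ R > 0, volume (thickening R P) ≠ ⊤ :=
      ⟨2, by norm_num, hthick2fin⟩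
    have h1 := tendsto_measure_thickening (μ := volume) hex
    rw [hP.closure_eq] at h1
    have h2 : Tendsto (fun m : ℕ => 2/(m:ℝ)) atTop (𝓝[>] 0) := by
      rw [tendsto_nhdsWithin_iff]
      refine ⟨tendsto_const_div_atTop_nhds_zero_nat 2, ?_⟩
      filter_upwards [eventually_gt_atTop 0] with m hm
      have hm' : (0:ℝ) < m := by exact_mod_cast hm
      exact Set.mem_Ioi.mpr (by positivity)
    exact (ENNReal.tendsto_toReal hPfin).comp (h1.comp h2)
  -- squeeze
  refine tendsto_of_tendsto_of_tendsto_of_le_of_le' hKlim' hTlim ?_ ?_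
  · filter_upwards [eventually_ge_atTop 1] with m hm
    rw [hcard, ← hUtoReal m hm]
    exact ENNReal.toReal_mono (hUfin m hm) (measure_mono (hlower m hm))
  · filter_upwards [eventually_ge_atTop 1] with m hm
    rw [hcard, ← hUtoReal m hm]
    refine ENNReal.toReal_mono ?_ (measure_mono (hupper m hm))
    refine ne_top_of_le_ne_top hthick2fin (measure_mono (thickening_mono ?_ _))
    have hm' : (1:ℝ) ≤ m := by exact_mod_cast hm
    calc 2/(m:ℝ) ≤ 2/1 := by apply div_le_div_of_nonneg_left <;> norm_num <;> linarith
      _ = 2 := by norm_num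
end

end

open Bornology Metric in
/-- Let `D` be a `T`-Weil divisor on a complete `n`-dimensional toric
variety with polytope `P_D = {u : ⟨u, v_ρ⟩ ≥ -d_ρ ∀ρ}` which is `n`-dimensional
(nonempty interior) with normal fan equal to `Δ`.  Since `h^0(mD) = #(mP_D ∩ M)`
(`hh0`), one has `ĥ^0(D) = vol P_D`; and if moreover `D` is Cartier and ample — so that
`h^i(mD) = 0` for `i > 0` by Demazure vanishing (`hvanish`), whence
`χ(O(mD)) = h^0(mD)` — the asymptotic Riemann–Roch limit (`hRR`) gives
`(D^n) = vol P_D = n! · (Euclidean volume of P_D)`. -/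
theorem volume_of_ample_divisor
    (n r : ℕ) (v : Fin r → Fin n → ℤ) (d : Fin r → ℤ)
    (P : Set (Fin n → ℝ))
    (hPdef : P = {u : Fin n → ℝ | ∀ i, -(d i : ℝ) ≤ ∑ j, u j * (v i j : ℝ)})
    (hbdd : Bornology.IsBounded P)
    (hdim : (interior P).Nonempty)
    (h0 : ℕ → ℕ)
    (hh0 : ∀ m : ℕ, h0 m =
      Nat.card {u : Fin n → ℤ | (fun j => (u j : ℝ)) ∈ (m : ℝ) • P})
    (hhat0 : ℝ)
    (hlim : Tendsto (fun m : ℕ => (h0 m : ℝ) / ((m : ℝ) ^ n / (n.factorial : ℝ)))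
      atTop (𝓝 hhat0))
    (hi : ℕ → ℕ → ℕ)                 -- `hi m i = h^i(mD)`
    (hvanish : ∀ m i, 0 < i → hi m i = 0)
    (chi : ℕ → ℤ)
    (hchi : ∀ m, chi m = (h0 m : ℤ) +
      ∑ i ∈ Icc 1 n, (-1 : ℤ) ^ i * (hi m i : ℤ))
    (Dn : ℝ)
    (hRR : Tendsto (fun m : ℕ => (chi m : ℝ) / ((m : ℝ) ^ n / (n.factorial : ℝ)))
      atTop (𝓝 Dn)) :
    hhat0 = (n.factorial : ℝ) * (volume P).toReal ∧
    Dn = (n.factorial : ℝ) * (volume P).toReal := by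
  have L : Tendsto (fun m : ℕ => (h0 m : ℝ) / ((m : ℝ) ^ n / (n.factorial : ℝ)))
      atTop (𝓝 ((n.factorial : ℝ) * (volume P).toReal)) := by
    rcases Nat.eq_zero_or_pos n with hn | hn
    · subst hn
      haveI : Subsingleton (Fin 0 → ℝ) := ⟨fun a b => funext fun i => i.elim0⟩
      obtain ⟨x, hx⟩ := hdim
      have hPuniv : P = Set.univ :=
        Set.eq_univ_of_forall fun y => by rw [Subsingleton.elim y x]; exact interior_subset hx
      have hvol : (volume P).toReal = 1 := by
        rw [hPuniv, ← Set.pi_univ, volume_pi_pi]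
        simp
      have hone : ∀ m : ℕ, 1 ≤ m → h0 m = 1 := by
        intro m hm
        have hms : ((m : ℝ)) ≠ 0 := by positivity
        have hset : {u : Fin 0 → ℤ | (fun j => (u j : ℝ)) ∈ (m : ℝ) • P} = Set.univ :=
          Set.eq_univ_of_forall fun u => by
            rw [Set.mem_setOf_eq, hPuniv, Set.smul_set_univ₀ hms]; trivial
        rw [hh0 m, hset, Nat.card_coe_set_eq, Set.ncard_univ]
        exact Nat.card_unique
      have hval : (Nat.factorial 0 : ℝ) * (volume P).toReal = 1 := by
        simp [hvol]
      rw [hval]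
      refine Tendsto.congr' ?_ tendsto_const_nhds
      filter_upwards [eventually_ge_atTop 1] with m hm
      rw [hone m hm]
      simp
    · have hclosed : IsClosed P := by
        rw [hPdef]
        have heq : {u : Fin n → ℝ | ∀ i, -(d i : ℝ) ≤ ∑ j, u j * (v i j : ℝ)} =
            ⋂ i, {u : Fin n → ℝ | -(d i : ℝ) ≤ ∑ j, u j * (v i j : ℝ)} := by
          ext u; simp [Set.mem_iInter]
        rw [heq]
        exact isClosed_iInter fun i =>
          isClosed_le continuous_const
            (continuous_finset_sum _ fun j _ => (continuous_apply j).mul continuous_const)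
      have hconv : Convex ℝ P := by
        rw [hPdef]
        have heq : {u : Fin n → ℝ | ∀ i, -(d i : ℝ) ≤ ∑ j, u j * (v i j : ℝ)} =
            ⋂ i, {u : Fin n → ℝ | -(d i : ℝ) ≤ ∑ j, u j * (v i j : ℝ)} := by
          ext u; simp [Set.mem_iInter]
        rw [heq]
        refine convex_iInter fun i => convex_halfSpace_ge ?_ _
        constructor
        · intro a b
          simp [add_mul, Finset.sum_add_distrib]
        · intro c a
          simp [Finset.mul_sum, mul_assoc, mul_comm, mul_left_comm]
      have hc := (count_tendsto hn hclosed hconv hbdd).mul_const (n.factorial : ℝ)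
      rw [mul_comm] at hc
      refine Tendsto.congr (fun m => ?_) hc
      rw [hh0 m, div_div_eq_mul_div, div_mul_eq_mul_div]
  have hchieq : ∀ m : ℕ, (chi m : ℝ) = (h0 m : ℝ) := by
    intro m
    have hs : ∑ i ∈ Icc 1 n, (-1 : ℤ) ^ i * (hi m i : ℤ) = 0 :=
      Finset.sum_eq_zero fun i hi' => by
        rw [hvanish m i (mem_Icc.mp hi').1]; ring
    rw [hchi m, hs, add_zero]
    simp
  have L' : Tendsto (fun m : ℕ => (chi m : ℝ) / ((m : ℝ) ^ n / (n.factorial : ℝ)))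
      atTop (𝓝 ((n.factorial : ℝ) * (volume P).toReal)) :=
    L.congr fun m => by rw [hchieq m]
  exact ⟨tendsto_nhds_unique hlim L, tendsto_nhds_unique hRR L'⟩
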